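/- Let f be locally integrable on an open interval D with f(x) ≤ 0 for almost every x ∈ D and α ∈ D. Then u_f(x) = ∫_α^x exp(2∫_α^y f(z) dz) dy is concave on D and its inverse u_f^{-1} is convex on V = u_f(D). -/
import Mathlib


open MeasureTheory intervalIntegral Real Topology

/-- If `f ≤ 0` a.e. on `D`, then `u_f` is concave on `D` and its inverse is convex
on `V = u_f(D)`. -/
theorem uf_concave_inverse_convex
    (D : Set ℝ) (hD : IsOpen D) (hDoc : D.OrdConnected) (hne : D.Nonempty)
    (f : ℝ → ℝ)
    (hloc : ∀ a ∈ D, ∀ b ∈ D, IntervalIntegrable f volume a b)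
    (hf : ∀ᵐ x ∂(volume : Measure ℝ), x ∈ D → f x ≤ 0)
    (α : ℝ) (hα : α ∈ D)
    (u : ℝ → ℝ) (hu : ∀ x, u x = ∫ y in α..x, Real.exp (2 * ∫ z in α..y, f z)) :
    ConcaveOn ℝ D u ∧
    ∀ v : ℝ → ℝ, Set.InvOn v u D (u '' D) → ConvexOn ℝ (u '' D) v := by
  have hconv : Convex ℝ D := hDoc.convex
  set F : ℝ → ℝ := fun y => ∫ z in α..y, f z with hF
  set g : ℝ → ℝ := fun y => Real.exp (2 * F y) with hg
  have hue : u = fun x => ∫ y in α..x, g y := funext hu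
  -- F is continuous at each point of D
  have hFc : ∀ x ∈ D, ContinuousAt F x := by
    intro x hx
    obtain ⟨ε, hε, hsub⟩ := Metric.isOpen_iff.1 hD x hx
    have h1 : x - ε / 2 ∈ D := hsub (by simp [Real.ball_eq_Ioo]; constructor <;> nlinarith)
    have h2 : x + ε / 2 ∈ D := hsub (by simp [Real.ball_eq_Ioo]; constructor <;> nlinarith)
    have hmin : min α (x - ε / 2) ∈ D := by
      rcases min_cases α (x - ε / 2) with ⟨h, _⟩ | ⟨h, _⟩ <;> rw [h] <;> assumption
    have hmax : max α (x + ε / 2) ∈ D := by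
      rcases max_cases α (x + ε / 2) with ⟨h, _⟩ | ⟨h, _⟩ <;> rw [h] <;> assumption
    have hint : IntervalIntegrable f volume (min α (x - ε / 2)) (max α (x + ε / 2)) :=
      hloc _ hmin _ hmax
    have := intervalIntegral.continuousWithinAt_primitive (f := f) (μ := volume)
      (b₀ := x) (a := α) (b₁ := x - ε / 2) (b₂ := x + ε / 2) (measure_singleton x) hint
    refine this.continuousAt ?_
    exact Icc_mem_nhds (by linarith) (by linarith)
  have hgc : ∀ x ∈ D, ContinuousAt g x := fun x hx =>
    Real.continuous_exp.continuousAt.comp ((continuous_const.continuousAt).mul (hFc x hx))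
  have hgcD : ContinuousOn g D := fun x hx => (hgc x hx).continuousWithinAt
  have hgpos : ∀ y, 0 < g y := fun y => Real.exp_pos _
  -- F is antitone on D
  have hFanti : AntitoneOn F D := by
    intro x hx y hy hxy
    have hIcc : Set.Icc x y ⊆ D := fun z hz => hDoc.out hx hy ⟨hz.1, hz.2⟩
    have hintxy : IntervalIntegrable f volume x y := hloc _ hx _ hy
    have hadd : F x + ∫ z in x..y, f z = F y :=
      intervalIntegral.integral_add_adjacent_intervals (hloc _ hα _ hx) hintxy
    have hneg : (∫ z in x..y, f z) ≤ 0 := by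
      have : 0 ≤ ∫ z in x..y, (fun z => -f z) z := by
        refine intervalIntegral.integral_nonneg_of_ae_restrict hxy ?_
        filter_upwards [ae_restrict_of_ae hf, ae_restrict_mem measurableSet_Icc] with z h1 h2
        simpa using h1 (hIcc h2)
      have hneg' : (∫ z in x..y, (fun z => -f z) z) = -∫ z in x..y, f z := by
        simp [intervalIntegral.integral_neg]
      linarith [hneg' ▸ this]
    linarith
  have hganti : AntitoneOn g D := fun x hx y hy hxy =>
    Real.exp_le_exp.2 (by nlinarith [hFanti hx hy hxy])
  -- derivative of u
  have hderiv : ∀ x ∈ D, HasDerivAt u (g x) x := by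
    intro x hx
    have hint : IntervalIntegrable g volume α x :=
      (hgcD.mono (hDoc.uIcc_subset hα hx)).intervalIntegrable
    have hmeas : StronglyMeasurableAtFilter g (𝓝 x) volume :=
      hgcD.stronglyMeasurableAtFilter hD x hx
    have := intervalIntegral.integral_hasDerivAt_right hint hmeas (hgc x hx)
    rwa [hue]
  have hdint : interior D = D := hD.interior_eq
  have hucont : ContinuousOn u D := fun x hx => (hderiv x hx).continuousAt.continuousWithinAt
  have hderivEq : ∀ x ∈ D, deriv u x = g x := fun x hx => (hderiv x hx).deriv
  have hconc : ConcaveOn ℝ D u := by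
    refine AntitoneOn.concaveOn_of_deriv hconv hucont ?_ ?_
    · rw [hdint]; exact fun x hx => (hderiv x hx).differentiableAt.differentiableWithinAt
    · rw [hdint]; intro x hx y hy hxy
      rw [hderivEq x hx, hderivEq y hy]; exact hganti hx hy hxy
  have hmono : StrictMonoOn u D := by
    refine strictMonoOn_of_deriv_pos hconv hucont ?_
    rw [hdint]; intro x hx; rw [hderivEq x hx]; exact hgpos x
  refine ⟨hconc, ?_⟩
  intro v hv
  have himgconv : Convex ℝ (u '' D) := by
    rw [convex_iff_ordConnected]
    exact (hconv.isPreconnected.image u hucont).ordConnected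
  refine ⟨himgconv, ?_⟩
  rintro y1 ⟨x1, hx1, rfl⟩ y2 ⟨x2, hx2, rfl⟩ a b ha hb hab
  have hmidD : a • x1 + b • x2 ∈ D := hconv hx1 hx2 ha hb hab
  obtain ⟨x, hx, hxw⟩ := himgconv ⟨x1, hx1, rfl⟩ ⟨x2, hx2, rfl⟩ ha hb hab
  have hvw : v (a • u x1 + b • u x2) = x := by rw [← hxw]; exact hv.1 hx
  rw [hvw, hv.1 hx1, hv.1 hx2]
  have hle : u x ≤ u (a • x1 + b • x2) := by
    rw [hxw]
    exact hconc.2 hx1 hx2 ha hb hab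
  exact (hmono.le_iff_le hx hmidD).1 hle
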